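/- A function p : L^n → L on a bounded chain L is a polynomial function if and only if it is range-idempotent, comonotonic minitive and comonotonic maxitive, i.e., p(c,…,c) = c for every c in the convex hull of the range of p, and for any two comonotonic tuples x, x′ ∈ L^n, p(x ∧ x′) = p(x) ∧ p(x′) and p(x ∨ x′) = p(x) ∨ p(x′). -/

import Mathlib

open Function

/-- A lattice polynomial function on a chain `M`: a member of the smallest set of `n`-ary
functions containing all projections and constants and closed under pointwise `⊓` and `⊔`. -/
inductive IsLatticePolynomial {M : Type*} [LinearOrder M] {n : ℕ} :
    ((Fin n → M) → M) → Prop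
  | proj (i : Fin n) : IsLatticePolynomial fun x => x i
  | const (c : M) : IsLatticePolynomial fun _ => c
  | inf {p q : (Fin n → M) → M} :
      IsLatticePolynomial p → IsLatticePolynomial q →
      IsLatticePolynomial fun x => p x ⊓ q x
  | sup {p q : (Fin n → M) → M} :
      IsLatticePolynomial p → IsLatticePolynomial q →
      IsLatticePolynomial fun x => p x ⊔ q x

/-- A Sugeno integral: an idempotent lattice polynomial function. -/
def IsSugenoIntegral {M : Type*} [LinearOrder M] {n : ℕ} (q : (Fin n → M) → M) : Prop :=
  IsLatticePolynomial q ∧ ∀ c : M, q (fun _ => c) = c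

/-- `φ` satisfies the boundary conditions: `φ 0 ≤ φ x ≤ φ 1` for all `x`. -/
def BoundaryCond {α : Type*} {M : Type*} [LE α] [OrderTop α] [OrderBot α] [Preorder M]
    (φ : α → M) : Prop :=
  ∀ x : α, φ ⊥ ≤ φ x ∧ φ x ≤ φ ⊤

/-- The median of three elements of a lattice. -/
def med {α : Type*} [Lattice α] (a b c : α) : α :=
  (a ⊓ b) ⊔ (a ⊓ c) ⊔ (b ⊓ c)

/-- Two `n`-tuples are comonotonic if some permutation sorts both simultaneously. -/
def Comonotone {M : Type*} [Preorder M] {n : ℕ} (y y' : Fin n → M) : Prop :=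
  ∃ σ : Equiv.Perm (Fin n), Monotone (y ∘ σ) ∧ Monotone (y' ∘ σ)

section PiDefs

variable {n : ℕ} {M : Type*} {L : Fin n → Type*}
variable [∀ i, LinearOrder (L i)] [∀ i, BoundedOrder (L i)]
variable [LinearOrder M] [BoundedOrder M]

/-- A pseudo-polynomial function: composition of a lattice polynomial function with unary
maps satisfying the boundary conditions. -/
def IsPseudoPolynomial (f : (∀ i, L i) → M) : Prop :=
  ∃ (p : (Fin n → M) → M) (φ : ∀ i, L i → M),
    IsLatticePolynomial p ∧ (∀ i, BoundaryCond (φ i)) ∧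
      ∀ x, f x = p fun i => φ i (x i)

/-- A pseudo-Sugeno integral: composition of a Sugeno integral with unary maps satisfying
the boundary conditions. -/
def IsPseudoSugenoIntegral (f : (∀ i, L i) → M) : Prop :=
  ∃ (q : (Fin n → M) → M) (φ : ∀ i, L i → M),
    IsSugenoIntegral q ∧ (∀ i, BoundaryCond (φ i)) ∧
      ∀ x, f x = q fun i => φ i (x i)

/-- A Sugeno utility function: composition of a Sugeno integral with local utility
(order-preserving) functions. -/
def IsSugenoUtility (f : (∀ i, L i) → M) : Prop :=
  ∃ (q : (Fin n → M) → M) (φ : ∀ i, L i → M),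
    IsSugenoIntegral q ∧ (∀ i, Monotone (φ i)) ∧
      ∀ x, f x = q fun i => φ i (x i)

/-- `f` is pseudo-median decomposable w.r.t. the unary maps `φ`. -/
def PseudoMedianDecomp (f : (∀ i, L i) → M) (φ : ∀ i, L i → M) : Prop :=
  ∀ (x : ∀ i, L i) (k : Fin n),
    f x = med (f (update x k ⊥)) (φ k (x k)) (f (update x k ⊤))

/-- `d ∈ φ̄⁻¹(c)`: all components of `d` are mapped to `c` by the corresponding `φ i`. -/
def FiberAll (φ : ∀ i, L i → M) (c : M) (d : ∀ i, L i) : Prop :=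
  ∀ i, φ i (d i) = c

/-- `f` is pseudo-min homogeneous w.r.t. `φ` with common range `R`. -/
def PseudoMinHomog (f : (∀ i, L i) → M) (φ : ∀ i, L i → M) (R : Set M) : Prop :=
  ∀ (x : ∀ i, L i), ∀ c ∈ R, ∀ d : ∀ i, L i, FiberAll φ c d →
    f (fun i => x i ⊓ d i) = f x ⊓ c

/-- `f` is pseudo-max homogeneous w.r.t. `φ` with common range `R`. -/
def PseudoMaxHomog (f : (∀ i, L i) → M) (φ : ∀ i, L i → M) (R : Set M) : Prop :=
  ∀ (x : ∀ i, L i), ∀ c ∈ R, ∀ d : ∀ i, L i, FiberAll φ c d →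
    f (fun i => x i ⊔ d i) = f x ⊔ c

/-- Condition (PI): `f d = c` whenever `d ∈ φ̄⁻¹(c)`, `c ∈ R`. -/
def PseudoPI (f : (∀ i, L i) → M) (φ : ∀ i, L i → M) (R : Set M) : Prop :=
  ∀ c ∈ R, ∀ d : ∀ i, L i, FiberAll φ c d → f d = c

/-- `[x]_d`: the tuple whose `i`th component is `0` if `x i ≤ d i`, and `x i` otherwise. -/
def cutBelow (x d : ∀ i, L i) : ∀ i, L i := fun i => if x i ≤ d i then ⊥ else x i

/-- `[x]^d`: the tuple whose `i`th component is `1` if `x i ≥ d i`, and `x i` otherwise. -/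
def cutAbove (x d : ∀ i, L i) : ∀ i, L i := fun i => if d i ≤ x i then ⊤ else x i

/-- `f` is pseudo-horizontally maxitive w.r.t. `φ` with common range `R`. -/
def PseudoHorizMax (f : (∀ i, L i) → M) (φ : ∀ i, L i → M) (R : Set M) : Prop :=
  ∀ (x : ∀ i, L i), ∀ c ∈ R, ∀ d : ∀ i, L i, FiberAll φ c d →
    f x = f (fun i => x i ⊓ d i) ⊔ f (cutBelow x d)

/-- `f` is pseudo-horizontally minitive w.r.t. `φ` with common range `R`. -/
def PseudoHorizMin (f : (∀ i, L i) → M) (φ : ∀ i, L i → M) (R : Set M) : Prop :=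
  ∀ (x : ∀ i, L i), ∀ c ∈ R, ∀ d : ∀ i, L i, FiberAll φ c d →
    f x = f (fun i => x i ⊔ d i) ⊓ f (cutAbove x d)

/-- `f` is pseudo-comonotonic minitive w.r.t. `φ`. -/
def PseudoComonMin (f : (∀ i, L i) → M) (φ : ∀ i, L i → M) : Prop :=
  ∀ x x' : ∀ i, L i,
    Comonotone (fun i => φ i (x i)) (fun i => φ i (x' i)) →
      f (fun i => x i ⊓ x' i) = f x ⊓ f x'

/-- `f` is pseudo-comonotonic maxitive w.r.t. `φ`. -/
def PseudoComonMax (f : (∀ i, L i) → M) (φ : ∀ i, L i → M) : Prop :=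
  ∀ x x' : ∀ i, L i,
    Comonotone (fun i => φ i (x i)) (fun i => φ i (x' i)) →
      f (fun i => x i ⊔ x' i) = f x ⊔ f x'

/-- The disjunctive normal form polynomial determined by the values of `f` on the
characteristic vectors `e_I`: `y ↦ ⋁_{I ⊆ [n]} (f(e_I) ∧ ⋀_{i ∈ I} y i)`. -/
def qDNF (f : (∀ i, L i) → M) : (Fin n → M) → M :=
  fun y => Finset.univ.sup fun I : Finset (Fin n) =>
    f (fun i => if i ∈ I then ⊤ else ⊥) ⊓ I.inf y

end PiDefs

section ChainDefs

variable {n : ℕ} {M : Type*} [LinearOrder M] [BoundedOrder M]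

/-- The DNF polynomial `y ↦ ⋁_{I ⊆ [n]} (p(e_I) ∧ ⋀_{i ∈ I} y i)` for `p : M^n → M`. -/
def polyDNF (p : (Fin n → M) → M) : (Fin n → M) → M :=
  fun y => Finset.univ.sup fun I : Finset (Fin n) =>
    p (fun i => if i ∈ I then ⊤ else ⊥) ⊓ I.inf y

/-- The convex hull of the range of `p` (in a chain). -/
def clRan (p : (Fin n → M) → M) : Set M :=
  {c : M | ∃ a ∈ Set.range p, ∃ b ∈ Set.range p, a ≤ c ∧ c ≤ b}

/-- Median decomposability of `p : M^n → M`. -/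
def MedianDecomp (p : (Fin n → M) → M) : Prop :=
  ∀ (x : Fin n → M) (k : Fin n),
    p x = med (p (update x k ⊥)) (x k) (p (update x k ⊤))

/-- `S`-min homogeneity: `p(x ∧ c) = p(x) ∧ c` for all `c ∈ S`. -/
def MinHomogOn (p : (Fin n → M) → M) (S : Set M) : Prop :=
  ∀ (x : Fin n → M), ∀ c ∈ S, p (fun i => x i ⊓ c) = p x ⊓ c

/-- `S`-max homogeneity: `p(x ∨ c) = p(x) ∨ c` for all `c ∈ S`. -/
def MaxHomogOn (p : (Fin n → M) → M) (S : Set M) : Prop :=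
  ∀ (x : Fin n → M), ∀ c ∈ S, p (fun i => x i ⊔ c) = p x ⊔ c

/-- Range-idempotence: `p(c,…,c) = c` for every `c` in the convex hull of the range. -/
def RangeIdempotent (p : (Fin n → M) → M) : Prop :=
  ∀ c ∈ clRan p, p (fun _ => c) = c

/-- Horizontal minitivity: `p(x) = p(x ∨ c) ∧ p([x]^c)`. -/
def HorizMin (p : (Fin n → M) → M) : Prop :=
  ∀ (x : Fin n → M) (c : M),
    p x = p (fun i => x i ⊔ c) ⊓ p (fun i => if c ≤ x i then ⊤ else x i)

/-- Horizontal maxitivity: `p(x) = p(x ∧ c) ∨ p([x]_c)`. -/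
def HorizMax (p : (Fin n → M) → M) : Prop :=
  ∀ (x : Fin n → M) (c : M),
    p x = p (fun i => x i ⊓ c) ⊔ p (fun i => if x i ≤ c then ⊥ else x i)

end ChainDefs

section Aux

variable {n : ℕ} {M : Type*} [LinearOrder M] [BoundedOrder M]

/-- Characteristic vector of the σ-upper set `{i : k ≤ σ⁻¹ i}`. -/
def eA (σ : Equiv.Perm (Fin n)) (k : Fin n) : Fin n → M :=
  fun i => if k ≤ σ.symm i then ⊤ else ⊥

lemma eA_antitone (σ : Equiv.Perm (Fin n)) {k l : Fin n} (h : k ≤ l) :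
    (eA σ l : Fin n → M) ≤ eA σ k := by
  intro i
  unfold eA
  split_ifs with h1 h2
  · exact le_rfl
  · exact absurd (h.trans h1) h2
  · exact bot_le
  · exact le_rfl

lemma eA_sorted (σ : Equiv.Perm (Fin n)) (k : Fin n) :
    Monotone ((eA σ k : Fin n → M) ∘ σ) := by
  intro a b hab
  simp only [Function.comp, eA, Equiv.symm_apply_apply]
  split_ifs with h1 h2
  · exact le_rfl
  · exact absurd (h1.trans hab) h2
  · exact bot_le
  · exact le_rfl

omit [BoundedOrder M] in
lemma poly_mono {p : (Fin n → M) → M} (hp : IsLatticePolynomial p) : Monotone p := by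
  induction hp with
  | proj i => exact fun a b hab => hab i
  | const c => exact monotone_const
  | inf h1 h2 ih1 ih2 => exact fun a b hab => inf_le_inf (ih1 hab) (ih2 hab)
  | sup h1 h2 ih1 ih2 => exact fun a b hab => sup_le_sup (ih1 hab) (ih2 hab)

lemma sup_attain {ι : Type*} (s : Finset ι) (f : ι → M) (a : M) :
    a ⊔ s.sup f = a ∨ ∃ k ∈ s, a ⊔ s.sup f = f k := by
  rcases le_or_gt (s.sup f) a with h | h
  · exact Or.inl (sup_eq_left.2 h)
  · rcases s.eq_empty_or_nonempty with rfl | hne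
    · simp at h
    · obtain ⟨k, hk, hsup⟩ := Finset.exists_mem_eq_sup s hne f
      exact Or.inr ⟨k, hk, by rw [sup_eq_right.2 h.le, hsup]⟩

lemma sup_split {ι : Type*} (s : Finset ι) (f g : ι → M) :
    (s.sup fun k => f k ⊔ g k) = s.sup f ⊔ s.sup g := by
  apply le_antisymm
  · exact Finset.sup_le fun k hk => sup_le_sup (Finset.le_sup hk) (Finset.le_sup hk)
  · refine sup_le (Finset.sup_le fun k hk => ?_) (Finset.sup_le fun k hk => ?_)
    · exact le_trans le_sup_left (Finset.le_sup (f := fun k => f k ⊔ g k) hk)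
    · exact le_trans le_sup_right (Finset.le_sup (f := fun k => f k ⊔ g k) hk)

end Aux

section Repr

variable {n : ℕ} {M : Type*} [LinearOrder M] [BoundedOrder M]

/-- Representation of a lattice polynomial on a sorted tuple. -/
lemma poly_repr {p : (Fin n → M) → M} (hp : IsLatticePolynomial p) (σ : Equiv.Perm (Fin n))
    {x : Fin n → M} (hx : Monotone (x ∘ σ)) :
    p x = p (fun _ => ⊥) ⊔ Finset.univ.sup (fun k => p (eA σ k) ⊓ x (σ k)) := by
  induction hp with
  | proj i =>
    simp only [eA]
    apply le_antisymm
    · refine le_trans ?_ le_sup_right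
      refine le_trans ?_ (Finset.le_sup (Finset.mem_univ (σ.symm i)))
      simp
    · refine sup_le bot_le (Finset.sup_le fun k _ => ?_)
      split_ifs with h
      · exact le_trans inf_le_right (by simpa using hx h)
      · simp
  | const c =>
    refine (sup_eq_left.2 (Finset.sup_le fun k _ => inf_le_left)).symm
  | @inf q r hq hr ihq ihr =>
    dsimp only
    apply le_antisymm
    · -- use attainment of sups
      rcases sup_attain Finset.univ (fun k => q (eA σ k) ⊓ x (σ k)) (q fun _ => ⊥) with h1 | ⟨k, _, h1⟩ <;>
        rcases sup_attain Finset.univ (fun k => r (eA σ k) ⊓ x (σ k)) (r fun _ => ⊥) with h2 | ⟨j, _, h2⟩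
      · rw [ihq, h1, ihr, h2]; exact le_sup_left
      · rw [ihq, h1, ihr, h2]
        refine le_trans ?_ (Finset.le_sup (f := fun k => (q (eA σ k) ⊓ r (eA σ k)) ⊓ x (σ k)) (Finset.mem_univ j)) |>.trans le_sup_right
        have : q (fun _ => ⊥) ≤ q (eA σ j) := poly_mono hq (fun i => bot_le)
        exact le_inf (le_inf (inf_le_left.trans this) (inf_le_right.trans inf_le_left))
          (inf_le_right.trans inf_le_right)
      · rw [ihq, h1, ihr, h2]
        refine le_trans ?_ (Finset.le_sup (f := fun k => (q (eA σ k) ⊓ r (eA σ k)) ⊓ x (σ k)) (Finset.mem_univ k)) |>.trans le_sup_right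
        have : r (fun _ => ⊥) ≤ r (eA σ k) := poly_mono hr (fun i => bot_le)
        exact le_inf (le_inf (inf_le_left.trans inf_le_left) (inf_le_right.trans this))
          (inf_le_left.trans inf_le_right)
      · rw [ihq, h1, ihr, h2]
        rcases le_total k j with hkj | hkj
        · refine le_trans ?_ (Finset.le_sup (f := fun k => (q (eA σ k) ⊓ r (eA σ k)) ⊓ x (σ k)) (Finset.mem_univ k)) |>.trans le_sup_right
          have hr' : r (eA σ j) ≤ r (eA σ k) := poly_mono hr (eA_antitone σ hkj)
          exact le_inf (le_inf (inf_le_left.trans inf_le_left) (inf_le_right.trans (inf_le_left.trans hr')))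
            (inf_le_left.trans inf_le_right)
        · refine le_trans ?_ (Finset.le_sup (f := fun k => (q (eA σ k) ⊓ r (eA σ k)) ⊓ x (σ k)) (Finset.mem_univ j)) |>.trans le_sup_right
          have hq' : q (eA σ k) ≤ q (eA σ j) := poly_mono hq (eA_antitone σ hkj)
          exact le_inf (le_inf (inf_le_left.trans (inf_le_left.trans hq')) (inf_le_right.trans inf_le_left))
            (inf_le_right.trans inf_le_right)
    · refine sup_le (inf_le_inf (poly_mono hq fun i => bot_le) (poly_mono hr fun i => bot_le))
        (Finset.sup_le fun k _ => ?_)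
      have h1 : q (eA σ k) ⊓ r (eA σ k) ⊓ x (σ k) ≤ q x := by
        rw [ihq]
        refine le_trans ?_ le_sup_right
        refine le_trans ?_ (Finset.le_sup (Finset.mem_univ k))
        exact inf_le_inf_right _ inf_le_left
      have h2 : q (eA σ k) ⊓ r (eA σ k) ⊓ x (σ k) ≤ r x := by
        rw [ihr]
        refine le_trans ?_ le_sup_right
        refine le_trans ?_ (Finset.le_sup (Finset.mem_univ k))
        exact inf_le_inf_right _ inf_le_right
      exact le_inf h1 h2
  | @sup q r hq hr ihq ihr =>
    dsimp only
    rw [ihq, ihr]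
    have : (Finset.univ.sup fun k => (q (eA σ k) ⊔ r (eA σ k)) ⊓ x (σ k))
        = (Finset.univ.sup fun k => q (eA σ k) ⊓ x (σ k)) ⊔
          (Finset.univ.sup fun k => r (eA σ k) ⊓ x (σ k)) := by
      rw [← sup_split]
      exact Finset.sup_congr rfl fun k _ => inf_sup_right _ _ _
    rw [this]
    ac_rfl

end Repr

section Fwd

variable {n : ℕ} {M : Type*} [LinearOrder M] [BoundedOrder M]

lemma poly_rangeIdem {p : (Fin n → M) → M} (hp : IsLatticePolynomial p) :
    RangeIdempotent p := by
  intro c hc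
  obtain ⟨a, ⟨y, rfl⟩, b, ⟨z, rfl⟩, h1, h2⟩ := hc
  rcases Nat.eq_zero_or_pos n with hn | hn
  · subst hn
    have hy : y = fun _ => c := funext fun i => i.elim0
    have hz : z = fun _ => c := funext fun i => i.elim0
    rw [hy] at h1; rw [hz] at h2
    exact le_antisymm h1 h2
  · have e := poly_repr hp (Equiv.refl _) (x := fun _ => c) monotone_const
    rw [e]
    apply le_antisymm
    · refine sup_le (le_trans (poly_mono hp fun i => bot_le) h1)
        (Finset.sup_le fun k _ => inf_le_right)
    · refine le_trans ?_ le_sup_right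
      refine le_trans ?_ (Finset.le_sup (Finset.mem_univ (⟨0, hn⟩ : Fin n)))
      refine le_inf ?_ le_rfl
      have : (eA (Equiv.refl (Fin n)) ⟨0, hn⟩ : Fin n → M) = fun _ => ⊤ := by
        funext i
        simp [eA, Fin.le_def]
      rw [this]
      exact le_trans h2 (poly_mono hp fun i => le_top)

lemma poly_cmin {p : (Fin n → M) → M} (hp : IsLatticePolynomial p) :
    ∀ x x' : Fin n → M, Comonotone x x' →
      p (fun i => x i ⊓ x' i) = p x ⊓ p x' := by
  rintro x x' ⟨σ, hx, hx'⟩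
  have hxx' : Monotone ((fun i => x i ⊓ x' i) ∘ σ) :=
    fun a b h => inf_le_inf (hx h) (hx' h)
  apply le_antisymm
  · exact le_inf (poly_mono hp fun i => inf_le_left) (poly_mono hp fun i => inf_le_right)
  · have e1 := poly_repr hp σ hx
    have e2 := poly_repr hp σ hx'
    have er := poly_repr hp σ hxx'
    rw [er]
    rcases sup_attain Finset.univ (fun k => p (eA σ k) ⊓ x (σ k)) (p fun _ => ⊥) with h1 | ⟨k, _, h1⟩ <;> rw [h1] at e1
    · rw [e1]; exact inf_le_left.trans le_sup_left
    · rcases sup_attain Finset.univ (fun k => p (eA σ k) ⊓ x' (σ k)) (p fun _ => ⊥) with h2 | ⟨j, _, h2⟩ <;> rw [h2] at e2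
      · rw [e2]; exact inf_le_right.trans le_sup_left
      · rw [e1, e2]
        rcases le_total k j with hkj | hkj
        · refine le_trans ?_ ((Finset.le_sup (f := fun k => p (eA σ k) ⊓ ((fun i => x i ⊓ x' i) (σ k))) (Finset.mem_univ j)).trans le_sup_right)
          refine le_inf (inf_le_right.trans inf_le_left) (le_inf ?_ (inf_le_right.trans inf_le_right))
          exact inf_le_left.trans (inf_le_right.trans (hx hkj))
        · refine le_trans ?_ ((Finset.le_sup (f := fun k => p (eA σ k) ⊓ ((fun i => x i ⊓ x' i) (σ k))) (Finset.mem_univ k)).trans le_sup_right)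
          refine le_inf (inf_le_left.trans inf_le_left) (le_inf (inf_le_left.trans inf_le_right) ?_)
          exact inf_le_right.trans (inf_le_right.trans (hx' hkj))

lemma poly_cmax {p : (Fin n → M) → M} (hp : IsLatticePolynomial p) :
    ∀ x x' : Fin n → M, Comonotone x x' →
      p (fun i => x i ⊔ x' i) = p x ⊔ p x' := by
  rintro x x' ⟨σ, hx, hx'⟩
  have hxx' : Monotone ((fun i => x i ⊔ x' i) ∘ σ) :=
    fun a b h => sup_le_sup (hx h) (hx' h)
  rw [poly_repr hp σ hx, poly_repr hp σ hx', poly_repr hp σ hxx']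
  have : (Finset.univ.sup fun k => p (eA σ k) ⊓ ((fun i => x i ⊔ x' i) (σ k)))
      = (Finset.univ.sup fun k => p (eA σ k) ⊓ x (σ k)) ⊔
        (Finset.univ.sup fun k => p (eA σ k) ⊓ x' (σ k)) := by
    rw [← sup_split]
    exact Finset.sup_congr rfl fun k _ => inf_sup_left _ _ _
  rw [this]
  ac_rfl

end Fwd

section Bwd

variable {n : ℕ} {M : Type*} [LinearOrder M] [BoundedOrder M]

lemma comonotone_of_forall {y y' : Fin n → M}
    (h : ∀ i j, y i < y j → y' i ≤ y' j) : Comonotone y y' := by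
  classical
  set z : Fin n → M ×ₗ M := fun i => toLex (y i, y' i) with hz
  refine ⟨Tuple.sort z, fun a b hab => ?_, fun a b hab => ?_⟩
  · have hle := Tuple.monotone_sort z hab
    simp only [Function.comp, hz] at hle ⊢
    rcases Prod.Lex.le_iff.1 hle with h1 | ⟨h1, _⟩
    · exact h1.le
    · exact le_of_eq h1
  · have hle := Tuple.monotone_sort z hab
    simp only [Function.comp, hz] at hle ⊢
    rcases Prod.Lex.le_iff.1 hle with h1 | ⟨_, h2⟩
    · exact h _ _ h1
    · exact h2

lemma poly_finsetInf (s : Finset (Fin n)) :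
    IsLatticePolynomial (fun y : Fin n → M => s.inf y) := by
  classical
  induction s using Finset.induction with
  | empty => simpa using IsLatticePolynomial.const (⊤ : M)
  | @insert a s ha ih =>
    have : (fun y : Fin n → M => (insert a s).inf y) = fun y => y a ⊓ s.inf y := by
      funext y; rw [Finset.inf_insert]
    rw [this]
    exact .inf (.proj a) ih

lemma poly_finsetSup {ι : Type*} [DecidableEq ι] (f : ι → (Fin n → M) → M) :
    ∀ s : Finset ι, (∀ k ∈ s, IsLatticePolynomial (f k)) →
      IsLatticePolynomial (fun y => s.sup fun k => f k y) := by
  intro s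
  induction s using Finset.induction with
  | empty => intro _; simpa using IsLatticePolynomial.const (⊥ : M)
  | @insert a s ha ih =>
    intro h
    have : (fun y => (insert a s).sup fun k => f k y)
        = fun y => f a y ⊔ s.sup fun k => f k y := by
      funext y; rw [Finset.sup_insert]
    rw [this]
    exact .sup (h a (Finset.mem_insert_self a s))
      (ih fun k hk => h k (Finset.mem_insert_of_mem hk))

lemma polyDNF_poly (p : (Fin n → M) → M) : IsLatticePolynomial (polyDNF p) := by
  classical
  unfold polyDNF
  exact poly_finsetSup _ _ fun I _ => .inf (.const _) (poly_finsetInf I)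

variable {p : (Fin n → M) → M}

lemma bwd_delta_mono
    (hmin : ∀ x x' : Fin n → M, Comonotone x x' →
      p (fun i => x i ⊓ x' i) = p x ⊓ p x') :
    Monotone (fun c => p (fun _ => c)) := by
  intro c d hcd
  have h := hmin (fun _ => c) (fun _ => d) ⟨1, monotone_const, monotone_const⟩
  simp only [inf_eq_left.2 hcd] at h
  exact inf_eq_left.1 h.symm

lemma bwd_delta_med (hri : RangeIdempotent p)
    (hmin : ∀ x x' : Fin n → M, Comonotone x x' →
      p (fun i => x i ⊓ x' i) = p x ⊓ p x') (c : M) :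
    p (fun _ => c) = p (fun _ => ⊥) ⊔ (c ⊓ p (fun _ => ⊤)) := by
  have hmono := bwd_delta_mono hmin
  have hbt : p (fun _ => (⊥ : M)) ≤ p (fun _ => (⊤ : M)) := hmono le_top
  have hfix : ∀ t : M, p (fun _ => (⊥:M)) ≤ t → t ≤ p (fun _ => (⊤:M)) → p (fun _ => t) = t := by
    intro t h1 h2
    exact hri t ⟨p (fun _ => ⊥), ⟨_, rfl⟩, p (fun _ => ⊤), ⟨_, rfl⟩, h1, h2⟩
  rcases le_total c (p (fun _ => ⊥)) with h | h
  · have h1 : p (fun _ => c) ≤ p (fun _ => (⊥:M)) := by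
      calc p (fun _ => c) ≤ p (fun _ => p (fun _ => (⊥:M))) := hmono h
      _ = p (fun _ => (⊥:M)) := hfix _ le_rfl hbt
    have h2 : p (fun _ => (⊥:M)) ≤ p (fun _ => c) := hmono bot_le
    rw [le_antisymm h1 h2]
    exact (sup_eq_left.2 (le_trans inf_le_left h)).symm
  · rcases le_total c (p (fun _ => ⊤)) with h2 | h2
    · rw [hfix c h h2, inf_eq_left.2 h2, sup_eq_right.2 h]
    · have h1 : p (fun _ => (⊤:M)) ≤ p (fun _ => c) := by
        calc p (fun _ => (⊤:M)) = p (fun _ => p (fun _ => (⊤:M))) := (hfix _ hbt le_rfl).symm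
        _ ≤ p (fun _ => c) := hmono h2
      have h3 : p (fun _ => c) ≤ p (fun _ => (⊤:M)) := hmono le_top
      rw [le_antisymm h3 h1, inf_eq_right.2 h2, sup_eq_right.2 hbt]

lemma bwd_g_bounds
    (hmin : ∀ x x' : Fin n → M, Comonotone x x' →
      p (fun i => x i ⊓ x' i) = p x ⊓ p x')
    (σ : Equiv.Perm (Fin n)) (k : Fin n) :
    p (fun _ => ⊥) ≤ p (eA σ k) ∧ p (eA σ k) ≤ p (fun _ => ⊤) := by
  constructor
  · have h := hmin (fun _ => ⊥) (eA σ k) ⟨σ, monotone_const, eA_sorted σ k⟩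
    simp only [bot_inf_eq] at h
    exact inf_eq_left.1 h.symm
  · have h := hmin (eA σ k) (fun _ => ⊤) ⟨σ, eA_sorted σ k, monotone_const⟩
    simp only [inf_top_eq] at h
    exact inf_eq_left.1 h.symm

lemma bwd_cmax_sup'
    (hmax : ∀ x x' : Fin n → M, Comonotone x x' →
      p (fun i => x i ⊔ x' i) = p x ⊔ p x')
    (σ : Equiv.Perm (Fin n)) {ι : Type*} (s : Finset ι) (hs : s.Nonempty)
    (w : ι → Fin n → M) (hw : ∀ k ∈ s, Monotone (w k ∘ σ)) :
    p (fun i => s.sup' hs (fun k => w k i)) = s.sup' hs (fun k => p (w k)) := by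
  classical
  induction hs using Finset.Nonempty.cons_induction with
  | singleton a => simp
  | cons a s ha hs ih =>
    have hsorted : Monotone ((fun i => s.sup' hs (fun k => w k i)) ∘ σ) := by
      intro l l' hll'
      refine Finset.sup'_le hs _ fun k hk => le_trans (hw k (Finset.mem_cons_of_mem hk) hll') ?_
      exact Finset.le_sup' (f := fun k => w k (σ l')) hk
    have step := hmax (w a) (fun i => s.sup' hs (fun k => w k i))
      ⟨σ, hw a (Finset.mem_cons_self a s), hsorted⟩
    have : (fun i => (Finset.cons a s ha).sup' (Finset.cons_nonempty ha) (fun k => w k i))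
        = fun i => w a i ⊔ s.sup' hs (fun k => w k i) := by
      funext i; rw [Finset.sup'_cons]
    rw [this, step, ih fun k hk => hw k (Finset.mem_cons_of_mem hk), Finset.sup'_cons]

lemma sup_const_sup {ι : Type*} (s : Finset ι) (hs : s.Nonempty) (a : M) (f : ι → M) :
    (s.sup fun k => a ⊔ f k) = a ⊔ s.sup f := by
  apply le_antisymm
  · exact Finset.sup_le fun k hk => sup_le_sup le_rfl (Finset.le_sup hk)
  · obtain ⟨b, hb⟩ := hs
    refine sup_le (le_trans le_sup_left (Finset.le_sup (f := fun k => a ⊔ f k) hb))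
      (Finset.sup_le fun k hk => le_trans le_sup_right (Finset.le_sup (f := fun k => a ⊔ f k) hk))

lemma bwd_repr (hri : RangeIdempotent p)
    (hmin : ∀ x x' : Fin n → M, Comonotone x x' →
      p (fun i => x i ⊓ x' i) = p x ⊓ p x')
    (hmax : ∀ x x' : Fin n → M, Comonotone x x' →
      p (fun i => x i ⊔ x' i) = p x ⊔ p x')
    (hn : 0 < n) (σ : Equiv.Perm (Fin n)) {x : Fin n → M} (hx : Monotone (x ∘ σ)) :
    p x = p (fun _ => ⊥) ⊔ Finset.univ.sup (fun k => p (eA σ k) ⊓ x (σ k)) := by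
  classical
  have huniv : (Finset.univ : Finset (Fin n)).Nonempty := ⟨⟨0, hn⟩, Finset.mem_univ _⟩
  set w : Fin n → Fin n → M := fun k i => x (σ k) ⊓ eA σ k i with hw
  have hxw : x = fun i => Finset.univ.sup' huniv (fun k => w k i) := by
    funext i
    apply le_antisymm
    · refine le_trans ?_ (Finset.le_sup' _ (Finset.mem_univ (σ.symm i)))
      simp only [hw, eA, le_refl, if_pos, Equiv.apply_symm_apply, inf_top_eq, le_refl]
    · refine Finset.sup'_le huniv _ fun k _ => ?_
      simp only [hw, eA]
      split_ifs with hcond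
      · refine le_trans inf_le_left ?_
        have := hx (a := k) (b := σ.symm i) hcond
        simpa using this
      · simp
  have hwsorted : ∀ k ∈ (Finset.univ : Finset (Fin n)), Monotone (w k ∘ σ) := by
    intro k _ l l' hll'
    exact inf_le_inf le_rfl (eA_sorted σ k hll')
  have h1 : p x = Finset.univ.sup' huniv (fun k => p (w k)) := by
    conv_lhs => rw [hxw]
    exact bwd_cmax_sup' hmax σ _ huniv w hwsorted
  have h2 : ∀ k : Fin n, p (w k) = p (fun _ => ⊥) ⊔ (p (eA σ k) ⊓ x (σ k)) := by
    intro k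
    have hck := hmin (fun _ => x (σ k)) (eA σ k) ⟨σ, monotone_const, eA_sorted σ k⟩
    have hwk : w k = fun i => (fun _ => x (σ k)) i ⊓ eA σ k i := rfl
    obtain ⟨hg1, hg2⟩ := bwd_g_bounds hmin σ k
    rw [hwk, hck, bwd_delta_med hri hmin, inf_sup_right]
    congr 1
    · exact inf_eq_left.2 hg1
    · rw [inf_assoc, inf_eq_right.2 hg2, inf_comm]
  have h3 : (fun k => p (w k)) = fun k => p (fun _ => ⊥) ⊔ (p (eA σ k) ⊓ x (σ k)) :=
    funext h2
  rw [h1, h3, Finset.sup'_eq_sup, sup_const_sup _ huniv]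

end Bwd

section Final

variable {n : ℕ} {M : Type*} [LinearOrder M] [BoundedOrder M] {p : (Fin n → M) → M}

lemma bwd_eq_polyDNF (hri : RangeIdempotent p)
    (hmin : ∀ x x' : Fin n → M, Comonotone x x' →
      p (fun i => x i ⊓ x' i) = p x ⊓ p x')
    (hmax : ∀ x x' : Fin n → M, Comonotone x x' →
      p (fun i => x i ⊔ x' i) = p x ⊔ p x')
    (hn : 0 < n) (x : Fin n → M) :
    p x = polyDNF p x := by
  classical
  set σ := Tuple.sort x with hσ
  have hx : Monotone (x ∘ σ) := Tuple.monotone_sort x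
  have hrepr := bwd_repr hri hmin hmax hn σ hx
  rw [hrepr]
  unfold polyDNF
  apply le_antisymm
  · refine sup_le ?_ (Finset.sup_le fun k _ => ?_)
    · refine le_trans ?_ (Finset.le_sup
        (f := fun I : Finset (Fin n) => p (fun i => if i ∈ I then ⊤ else ⊥) ⊓ I.inf x)
        (Finset.mem_univ (∅ : Finset (Fin n))))
      have h1 : (fun i : Fin n => if i ∈ (∅ : Finset (Fin n)) then (⊤:M) else ⊥)
          = fun _ => ⊥ := by funext i; simp
      rw [h1]
      simp
    · set I : Finset (Fin n) := Finset.univ.filter (fun i => k ≤ σ.symm i) with hI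
      refine le_trans ?_ (Finset.le_sup
        (f := fun I : Finset (Fin n) => p (fun i => if i ∈ I then ⊤ else ⊥) ⊓ I.inf x)
        (Finset.mem_univ I))
      have h1 : (fun i : Fin n => if i ∈ I then (⊤:M) else ⊥) = eA σ k := by
        funext i; simp [hI, eA]
      rw [h1]
      refine inf_le_inf le_rfl (Finset.le_inf fun i hi => ?_)
      have hki : k ≤ σ.symm i := by simpa [hI] using hi
      simpa using hx hki
  · refine Finset.sup_le fun I _ => ?_
    rcases I.eq_empty_or_nonempty with rfl | hIne
    · have h1 : (fun i : Fin n => if i ∈ (∅ : Finset (Fin n)) then (⊤:M) else ⊥)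
          = fun _ => ⊥ := by funext i; simp
      rw [h1]
      simpa using le_sup_left
    · set k₀ : Fin n := I.inf' hIne (fun i => σ.symm i) with hk₀def
      obtain ⟨i0, hi0, hk0⟩ := Finset.exists_mem_eq_inf' hIne (fun i => σ.symm i)
      have hIk : ∀ i ∈ I, k₀ ≤ σ.symm i := fun i hi => Finset.inf'_le _ hi
      have hpe : p (fun i => if i ∈ I then (⊤:M) else ⊥) ≤ p (eA σ k₀) := by
        have hcom : Comonotone (fun i => if i ∈ I then (⊤:M) else ⊥) (eA σ k₀) := by
          apply comonotone_of_forall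
          intro i j hij
          have hjI : j ∈ I := by
            by_contra hj
            rw [if_neg hj] at hij
            exact absurd hij (not_lt_bot)
          have hkj : k₀ ≤ σ.symm j := hIk j hjI
          simp [eA, hkj]
        have h := hmin _ _ hcom
        have hsimp : (fun i => (if i ∈ I then (⊤:M) else ⊥) ⊓ eA σ k₀ i)
            = fun i => if i ∈ I then (⊤:M) else ⊥ := by
          funext i
          by_cases hiI : i ∈ I
          · simp [hiI, eA, hIk i hiI]
          · simp [hiI]
        rw [hsimp] at h
        exact le_of_eq h |>.trans inf_le_right
      have hinf : I.inf x ≤ x (σ k₀) := by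
        have hxe : x (σ k₀) = x i0 := by rw [hk₀def, hk0]; simp
        rw [hxe]
        exact Finset.inf_le hi0
      refine le_trans ?_ le_sup_right
      refine le_trans ?_ (Finset.le_sup
        (f := fun k => p (eA σ k) ⊓ x (σ k)) (Finset.mem_univ k₀))
      exact inf_le_inf hpe hinf

end Final

/-- `p : Lⁿ → L` is a polynomial function iff it is range-idempotent,
comonotonic minitive and comonotonic maxitive. -/
theorem polynomial_iff_comonotonic
    {n : ℕ} {M : Type*} [LinearOrder M] [BoundedOrder M] (p : (Fin n → M) → M) :
    IsLatticePolynomial p ↔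
      RangeIdempotent p ∧
      (∀ x x' : Fin n → M, Comonotone x x' →
        p (fun i => x i ⊓ x' i) = p x ⊓ p x') ∧
      (∀ x x' : Fin n → M, Comonotone x x' →
        p (fun i => x i ⊔ x' i) = p x ⊔ p x') := by
  constructor
  · intro hp
    exact ⟨poly_rangeIdem hp, poly_cmin hp, poly_cmax hp⟩
  · rintro ⟨hri, hmin, hmax⟩
    rcases Nat.eq_zero_or_pos n with hn | hn
    · subst hn
      have hconst : p = fun _ => p (fun i => i.elim0) := by
        funext y
        congr 1
        funext i
        exact i.elim0
      rw [hconst]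
      exact .const _
    · have hDNF : p = polyDNF p := funext fun x => bwd_eq_polyDNF hri hmin hmax hn x
      rw [hDNF]
      exact polyDNF_poly p
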